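/- Let G be a nonabelian finite group of order p·q, where p and q are primes with q < p. Then G has exactly p subgroups of order q. -/

import Mathlib

/-- A nonabelian finite group of order p·q, where p and q are primes with
q < p, has exactly p subgroups of order q. -/
theorem stmt_13 (p q : ℕ) (hp : p.Prime) (hq : q.Prime) (hqp : q < p)
    (G : Type*) [Group G] [Finite G] (hG : Nat.card G = p * q)
    (hna : ∃ a b : G, a * b ≠ b * a) :
    Nat.card {H : Subgroup G // Nat.card H = q} = p := by
  have hpq : p ≠ q := hqp.ne'
  haveI hpf : Fact p.Prime := ⟨hp⟩
  haveI hqf : Fact q.Prime := ⟨hq⟩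
  -- factorization facts
  have hfact : ∀ r : ℕ, r.Prime → (Nat.card G).factorization r =
      (if r = p then 1 else 0) + (if r = q then 1 else 0) := by
    intro r hr
    rw [hG, Nat.factorization_mul hp.pos.ne' hq.pos.ne', hp.factorization, hq.factorization,
      Finsupp.add_apply, Finsupp.single_apply, Finsupp.single_apply]
    simp [eq_comm]
  have hfq : (Nat.card G).factorization q = 1 := by
    rw [hfact q hq]; simp [hpq.symm]
  have hfp : (Nat.card G).factorization p = 1 := by
    rw [hfact p hp]; simp [hpq]
  -- every Sylow q subgroup has card q
  have hcardQ : ∀ P : Sylow q G, Nat.card P = q := fun P => by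
    rw [P.card_eq_multiplicity, hfq, pow_one]
  have hcardP : ∀ P : Sylow p G, Nat.card P = p := fun P => by
    rw [P.card_eq_multiplicity, hfp, pow_one]
  -- equivalence between subgroups of card q and Sylow q subgroups
  have e : {H : Subgroup G // Nat.card H = q} ≃ Sylow q G :=
    { toFun := fun H => Sylow.ofCard H.1 (by rw [hfq, pow_one]; exact H.2)
      invFun := fun P => ⟨P, hcardQ P⟩
      left_inv := fun H => by
        apply Subtype.ext
        exact Sylow.coe_ofCard (p := q) H.1 (by rw [hfq, pow_one]; exact H.2)
      right_inv := fun P => by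
        apply Sylow.ext
        exact Sylow.coe_ofCard (p := q) (P : Subgroup G) (by rw [hfq, pow_one]; exact hcardQ P) }
  rw [Nat.card_congr e]
  -- indices
  have hQne : Nonempty (Sylow q G) := inferInstance
  obtain ⟨Q⟩ := hQne
  have hidxQ : (Q : Subgroup G).index = p := by
    have := Subgroup.card_mul_index (Q : Subgroup G)
    rw [hcardQ Q, hG] at this
    exact Nat.eq_of_mul_eq_mul_left hq.pos (by rw [this, Nat.mul_comm p q])
  have hdvd : Nat.card (Sylow q G) ∣ p := hidxQ ▸ Q.card_dvd_index
  rcases (Nat.Prime.eq_one_or_self_of_dvd hp _ hdvd) with h1 | h1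
  · -- n_q = 1 : contradiction with nonabelian
    exfalso
    -- Sylow q normal
    have hQnormal : ∀ P : Sylow q G, (P : Subgroup G).Normal := by
      intro P
      rw [← Subgroup.normalizer_eq_top_iff, ← Subgroup.index_eq_one]
      exact (Sylow.card_eq_index_normalizer P).symm.trans h1
    -- Sylow p normal
    have hPnormal : ∀ P : Sylow p G, (P : Subgroup G).Normal := by
      intro P
      have hidxP : (P : Subgroup G).index = q := by
        have := Subgroup.card_mul_index (P : Subgroup G)
        rw [hcardP P, hG] at this
        exact Nat.eq_of_mul_eq_mul_left hp.pos this
      have hdvdP : Nat.card (Sylow p G) ∣ q := hidxP ▸ P.card_dvd_index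
      have hmod : Nat.card (Sylow p G) ≡ 1 [MOD p] := card_sylow_modEq_one p G
      rcases (Nat.Prime.eq_one_or_self_of_dvd hq _ hdvdP) with h2 | h2
      · rw [← Subgroup.normalizer_eq_top_iff, ← Subgroup.index_eq_one]
        exact (Sylow.card_eq_index_normalizer P).symm.trans h2
      · exfalso
        rw [h2] at hmod
        have h3 : q % p = 1 % p := hmod
        rw [Nat.mod_eq_of_lt hqp, Nat.mod_eq_of_lt (hq.one_lt.trans hqp)] at h3
        exact hq.one_lt.ne' h3
    -- all Sylow subgroups normal
    have hall : ∀ {r : ℕ} [Fact r.Prime] (P : Sylow r G), (P : Subgroup G).Normal := by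
      intro r hrf P
      rcases eq_or_ne r q with rfl | hrq
      · exact hQnormal P
      rcases eq_or_ne r p with rfl | hrp
      · exact hPnormal P
      have : Nat.card P = 1 := by
        rw [P.card_eq_multiplicity, hfact r hrf.out, if_neg hrp, if_neg hrq, pow_zero]
      have hbot : (P : Subgroup G) = ⊥ := Subgroup.card_eq_one.mp this
      rw [hbot]; infer_instance
    -- G isomorphic to product of its Sylow subgroups
    obtain ⟨a, b, hab⟩ := hna
    let e2 := Sylow.directProductOfNormal hall
    -- the domain is commutative
    have hcomm : ∀ x y : (∀ r : (Nat.card G).primeFactors, ∀ P : Sylow r G, P),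
        x * y = y * x := by
      intro x y
      funext r P
      haveI : Fact (r : ℕ).Prime := ⟨Nat.prime_of_mem_primeFactors r.2⟩
      have hc : Nat.card (P : Subgroup G) = (r : ℕ) := by
        rw [P.card_eq_multiplicity, hfact r (Nat.prime_of_mem_primeFactors r.2)]
        rcases eq_or_ne (r : ℕ) p with h | h
        · rw [if_pos h, if_neg (h ▸ hpq), pow_one, h]
        rcases eq_or_ne (r : ℕ) q with h' | h' 
        · rw [if_neg h, if_pos h', pow_one, h']
        · exfalso
          have := Nat.prime_of_mem_primeFactors r.2
          have hdr : (r : ℕ) ∣ p * q := hG ▸ Nat.dvd_of_mem_primeFactors r.2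
          rcases (Nat.Prime.dvd_mul this).mp hdr with h2 | h2
          · exact h ((Nat.prime_dvd_prime_iff_eq this hp).mp h2)
          · exact h' ((Nat.prime_dvd_prime_iff_eq this hq).mp h2)
      haveI : IsCyclic (P : Subgroup G) := isCyclic_of_prime_card hc
      letI := IsCyclic.commGroup (α := (P : Subgroup G))
      exact mul_comm _ _
    obtain ⟨x, rfl⟩ := e2.surjective a
    obtain ⟨y, rfl⟩ := e2.surjective b
    exact hab (by rw [← map_mul, ← map_mul, hcomm x y])
  · exact h1
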